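/- Let P be the solution of the synaptic CME with initial condition P(N0,0,0)=1 and P(n,o,0)=0 for all other states. Then for every integer 0 ≤ n0 ≤ N0, the upper tail of the marginal P_N is nonincreasing in time: for all 0 ≤ t ≤ t' one has ∑_{n=n0}^{N0} P_N(n, t') ≤ ∑_{n=n0}^{N0} P_N(n, t). -/

import Mathlib

open Finset

/-- Right-hand side of the synaptic chemical master equation (CME) for state `(n,o)`
at time `t`.  Terms referring to out-of-range indices are set to zero. -/
noncomputable def cmeRHS (N0 C : ℕ) (κd κe : ℝ) (κa : ℝ → ℝ)
    (P : ℕ → ℕ → ℝ → ℝ) (n o : ℕ) (t : ℝ) : ℝ :=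
  -(κd * (o : ℝ) + κe * ((n : ℝ) - (o : ℝ)) + κa t * ((n : ℝ) - (o : ℝ)) * ((C : ℝ) - (o : ℝ)))
      * P n o t
  + (if o + 1 ≤ C then κd * ((o : ℝ) + 1) * P n (o + 1) t else 0)
  + (if n + 1 ≤ N0 then κe * ((n : ℝ) + 1 - (o : ℝ)) * P (n + 1) o t else 0)
  + (if 1 ≤ o then κa t * ((n : ℝ) - (o : ℝ) + 1) * ((C : ℝ) - (o : ℝ) + 1) * P n (o - 1) t
     else 0)

/-- `P` solves the synaptic CME on `[0,∞)`. -/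
def IsCMESolution (N0 C : ℕ) (κd κe : ℝ) (κa : ℝ → ℝ) (P : ℕ → ℕ → ℝ → ℝ) : Prop :=
  ∀ n, n ≤ N0 → ∀ o, o ≤ C → ∀ t : ℝ, 0 ≤ t →
    HasDerivAt (fun s => P n o s) (cmeRHS N0 C κd κe κa P n o t) t

/-- Marginal distribution of the total number of neurotransmitters:
`P_N(n,t) = ∑_{o=0}^{C} P(n,o,t)`. -/
noncomputable def margN (C : ℕ) (P : ℕ → ℕ → ℝ → ℝ) (n : ℕ) (t : ℝ) : ℝ :=
  ∑ o ∈ Finset.range (C + 1), P n o t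

/-- Marginal distribution of the number of occupied receptors:
`P_O(o,t) = ∑_{n=0}^{N0} P(n,o,t)`. -/
noncomputable def margO (N0 : ℕ) (P : ℕ → ℕ → ℝ → ℝ) (o : ℕ) (t : ℝ) : ℝ :=
  ∑ n ∈ Finset.range (N0 + 1), P n o t

/-- Binomial probability mass function `P_B(k; m, p)`. -/
noncomputable def binPMF (m : ℕ) (p : ℝ) (k : ℕ) : ℝ :=
  (m.choose k : ℝ) * p ^ k * (1 - p) ^ (m - k)

/-- Right-hand side of the CME truncated to the state set `S`: the entry for a state
`(n,o) ∈ S` keeps the full diagonal term but only receives inflow from states in `S`. -/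
noncomputable def truncRHS (N0 C : ℕ) (κd κe : ℝ) (κa : ℝ → ℝ)
    (S : Finset (ℕ × ℕ)) (Q : ℕ → ℕ → ℝ → ℝ) (n o : ℕ) (t : ℝ) : ℝ :=
  -(κd * (o : ℝ) + κe * ((n : ℝ) - (o : ℝ)) + κa t * ((n : ℝ) - (o : ℝ)) * ((C : ℝ) - (o : ℝ)))
      * Q n o t
  + (if o + 1 ≤ C ∧ (n, o + 1) ∈ S then κd * ((o : ℝ) + 1) * Q n (o + 1) t else 0)
  + (if n + 1 ≤ N0 ∧ (n + 1, o) ∈ S then κe * ((n : ℝ) + 1 - (o : ℝ)) * Q (n + 1) o t else 0)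
  + (if 1 ≤ o ∧ (n, o - 1) ∈ S then
      κa t * ((n : ℝ) - (o : ℝ) + 1) * ((C : ℝ) - (o : ℝ) + 1) * Q n (o - 1) t
     else 0)

/-- `Q` is the truncated solution on the state set `S` for `t ≥ tk`, with initial
condition `Q(tk) = P(tk)|_S`. -/
def IsTruncatedSolution (N0 C : ℕ) (κd κe : ℝ) (κa : ℝ → ℝ)
    (S : Finset (ℕ × ℕ)) (tk : ℝ) (P Q : ℕ → ℕ → ℝ → ℝ) : Prop :=
  (∀ p ∈ S, Q p.1 p.2 tk = P p.1 p.2 tk) ∧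
  (∀ p ∈ S, ∀ t : ℝ, tk ≤ t →
    HasDerivAt (fun s => Q p.1 p.2 s) (truncRHS N0 C κd κe κa S Q p.1 p.2 t) t)


section Aux
open Filter Set

lemma slope_tendsto_right {p : ℝ → ℝ} {d t : ℝ} (hp : HasDerivAt p d t) :
    Tendsto (slope p t) (nhdsWithin t (Set.Ioi t)) (nhds d) :=
  (hasDerivAt_iff_tendsto_slope.mp hp).mono_left
    (nhdsWithin_mono _ (fun z hz => ne_of_gt hz))

lemma dini_negPart {p : ℝ → ℝ} {d t : ℝ} (hp : HasDerivAt p d t) {c ε : ℝ} (hε : 0 < ε)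
    (hc : (if p t ≤ 0 then max (-d) 0 else 0) ≤ c) :
    ∀ᶠ z in nhdsWithin t (Set.Ioi t),
      (z - t)⁻¹ * (max (-(p z)) 0 - max (-(p t)) 0) < c + ε := by
  by_cases h : p t ≤ 0
  · have hc' : max (-d) 0 ≤ c := by simpa [h] using hc
    have h1 : ∀ᶠ z in nhdsWithin t (Set.Ioi t), d - ε < slope p t z :=
      (slope_tendsto_right hp).eventually (eventually_gt_nhds (by linarith))
    filter_upwards [h1, self_mem_nhdsWithin] with z hz (hz2 : t < z)
    have hzt : (0:ℝ) < z - t := by linarith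
    have e1 : max (-(p z)) 0 - max (-(p t)) 0 ≤ max (p t - p z) 0 := by
      have : max (-(p t)) 0 = -(p t) := max_eq_left (by linarith)
      rw [this]
      have := max_add_add_right (-(p z)) 0 (p t)
      have h2 : max (-(p z) + p t) (0 + p t) ≤ max (p t - p z) 0 :=
        max_le_max (by linarith) (by linarith)
      linarith
    have e2 : (z - t)⁻¹ * (max (-(p z)) 0 - max (-(p t)) 0)
        ≤ max ((z - t)⁻¹ * (p t - p z)) 0 := by
      calc (z - t)⁻¹ * (max (-(p z)) 0 - max (-(p t)) 0)
          ≤ (z - t)⁻¹ * max (p t - p z) 0 := by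
            exact mul_le_mul_of_nonneg_left e1 (le_of_lt (inv_pos.mpr hzt))
        _ = max ((z - t)⁻¹ * (p t - p z)) ((z - t)⁻¹ * 0) :=
            (mul_max_of_nonneg _ _ (le_of_lt (inv_pos.mpr hzt)))
        _ = max ((z - t)⁻¹ * (p t - p z)) 0 := by rw [mul_zero]
    have e3 : (z - t)⁻¹ * (p t - p z) = -(slope p t z) := by
      rw [slope_def_field]; field_simp; ring
    have e4 : -(slope p t z) < -d + ε := by linarith
    have e5 : max ((z - t)⁻¹ * (p t - p z)) 0 < c + ε := by
      rw [e3]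
      have hcd : -d ≤ c := le_trans (le_max_left _ _) hc'
      have hc0 : (0:ℝ) ≤ c := le_trans (le_max_right _ _) hc'
      exact max_lt (by linarith) (by linarith)
    linarith
  · have hc0 : (0:ℝ) ≤ c := by simpa [h] using hc
    push_neg at h
    have h1 : ∀ᶠ z in nhdsWithin t (Set.Ioi t), 0 < p z :=
      ((hp.continuousAt.tendsto).eventually (eventually_gt_nhds h)).filter_mono
        nhdsWithin_le_nhds
    filter_upwards [h1] with z hz
    have : max (-(p z)) 0 = 0 := max_eq_right (by linarith)
    have ht : max (-(p t)) 0 = 0 := max_eq_right (by linarith)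
    rw [this, ht]
    simpa using by positivity

lemma dini_abs {p : ℝ → ℝ} {d t : ℝ} (hp : HasDerivAt p d t) {c ε : ℝ} (hε : 0 < ε)
    (hc : |d| ≤ c) :
    ∀ᶠ z in nhdsWithin t (Set.Ioi t), (z - t)⁻¹ * (|p z| - |p t|) < c + ε := by
  have h1 : ∀ᶠ z in nhdsWithin t (Set.Ioi t), |slope p t z| < c + ε := by
    have : Tendsto (fun z => |slope p t z|) (nhdsWithin t (Set.Ioi t)) (nhds |d|) :=
      (slope_tendsto_right hp).abs
    exact this.eventually (eventually_lt_nhds (by linarith))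
  filter_upwards [h1, self_mem_nhdsWithin] with z hz (hz2 : t < z)
  have hzt : (0:ℝ) < z - t := by linarith
  calc (z - t)⁻¹ * (|p z| - |p t|) ≤ (z - t)⁻¹ * |p z - p t| :=
        mul_le_mul_of_nonneg_left (abs_sub_abs_le_abs_sub _ _) (le_of_lt (inv_pos.mpr hzt))
    _ = |slope p t z| := by
        rw [slope_def_field, abs_div, abs_of_pos hzt]; ring
    _ < c + ε := hz

lemma gronwall_generic {ι : Type*} (S : Finset ι) (x d : ι → ℝ → ℝ) (a b K : ℝ)
    (φ : ℝ → ℝ) (c : ι → ℝ → ℝ)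
    (hφ0 : ∀ y, 0 ≤ φ y) (hφcont : Continuous φ)
    (hderiv : ∀ s ∈ S, ∀ t ∈ Set.Icc a b, HasDerivAt (x s) (d s t) t)
    (hdini : ∀ s ∈ S, ∀ t ∈ Set.Ico a b, ∀ ε, 0 < ε →
      ∀ᶠ z in nhdsWithin t (Set.Ioi t), (z - t)⁻¹ * (φ (x s z) - φ (x s t)) < c s t + ε)
    (hbound : ∀ s ∈ S, ∀ t ∈ Set.Ico a b, c s t ≤ K * ∑ u ∈ S, φ (x u t))
    (ha : ∀ s ∈ S, φ (x s a) = 0) :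
    ∀ s ∈ S, ∀ t ∈ Set.Icc a b, φ (x s t) = 0 := by
  set f : ℝ → ℝ := fun t => ∑ u ∈ S, φ (x u t) with hfdef
  set g : ℝ → ℝ := fun t => ∑ u ∈ S, c u t with hgdef
  have hfnonneg : ∀ t, 0 ≤ f t := fun t => Finset.sum_nonneg fun u _ => hφ0 _
  have hfcont : ContinuousOn f (Set.Icc a b) := by
    apply continuousOn_finset_sum
    intro u hu
    exact hφcont.comp_continuousOn
      (fun t ht => ((hderiv u hu t ht).continuousAt).continuousWithinAt)
  have hdini' : ∀ t ∈ Set.Ico a b, ∀ r, g t < r →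
      ∃ᶠ z in nhdsWithin t (Set.Ioi t), (z - t)⁻¹ * (f z - f t) < r := by
    intro t ht r hr
    set ε := (r - g t) / (S.card + 1) with hεdef
    have hcard : (0:ℝ) < (S.card : ℝ) + 1 := by positivity
    have hε : 0 < ε := div_pos (by linarith) hcard
    have hεeq : ε * ((S.card : ℝ) + 1) = r - g t := by
      rw [hεdef]; field_simp
    have hev : ∀ᶠ z in nhdsWithin t (Set.Ioi t),
        ∀ s ∈ S, (z - t)⁻¹ * (φ (x s z) - φ (x s t)) < c s t + ε :=
      (Filter.eventually_all_finset S).mpr (fun s hs => hdini s hs t ht ε hε)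
    apply Filter.Eventually.frequently
    filter_upwards [hev] with z hz
    have heq : (z - t)⁻¹ * (f z - f t)
        = ∑ s ∈ S, (z - t)⁻¹ * (φ (x s z) - φ (x s t)) := by
      rw [hfdef]; simp only []
      rw [← Finset.sum_sub_distrib, Finset.mul_sum]
    rw [heq]
    calc ∑ s ∈ S, (z - t)⁻¹ * (φ (x s z) - φ (x s t))
        ≤ ∑ s ∈ S, (c s t + ε) := Finset.sum_le_sum fun s hs => le_of_lt (hz s hs)
      _ = g t + S.card * ε := by
          rw [Finset.sum_add_distrib, Finset.sum_const, nsmul_eq_mul, hgdef]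
      _ < r := by nlinarith
  have hgb : ∀ t ∈ Set.Ico a b, g t ≤ ((S.card : ℝ) * K) * f t + 0 := by
    intro t ht
    rw [add_zero]
    calc g t ≤ ∑ _s ∈ S, K * f t := Finset.sum_le_sum fun s hs => hbound s hs t ht
      _ = (S.card : ℝ) * (K * f t) := by rw [Finset.sum_const, nsmul_eq_mul]
      _ = ((S.card : ℝ) * K) * f t := by ring
  have hfa : f a ≤ 0 := le_of_eq (Finset.sum_eq_zero fun s hs => ha s hs)
  have hmain := le_gronwallBound_of_liminf_deriv_right_le hfcont hdini' hfa hgb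
  intro s hs t ht
  have h0 : f t ≤ 0 := by
    have := hmain t ht
    rwa [gronwallBound_ε0, zero_mul] at this
  have h1 : φ (x s t) ≤ f t := Finset.single_le_sum (f := fun u => φ (x u t)) (fun u _ => hφ0 _) hs
  have := hφ0 (x s t)
  linarith

lemma nonneg_of_metzler {ι : Type*} (S : Finset ι) (x d : ι → ℝ → ℝ) (a b K : ℝ) (hK : 0 ≤ K)
    (hderiv : ∀ s ∈ S, ∀ t ∈ Set.Icc a b, HasDerivAt (x s) (d s t) t)
    (hbound : ∀ s ∈ S, ∀ t ∈ Set.Ico a b, x s t ≤ 0 →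
      -(d s t) ≤ K * ∑ u ∈ S, max (-(x u t)) 0)
    (ha : ∀ s ∈ S, 0 ≤ x s a) :
    ∀ s ∈ S, ∀ t ∈ Set.Icc a b, 0 ≤ x s t := by
  have key := gronwall_generic S x d a b K (fun y => max (-y) 0)
    (fun s t => if x s t ≤ 0 then max (-(d s t)) 0 else 0)
    (fun y => le_max_right _ _)
    (continuous_neg.max continuous_const)
    hderiv
    (fun s hs t ht ε hε => dini_negPart (hderiv s hs t (Set.Ico_subset_Icc_self ht)) hε le_rfl)
    (by
      intro s hs t ht
      have hKf : 0 ≤ K * ∑ u ∈ S, max (-(x u t)) 0 :=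
        mul_nonneg hK (Finset.sum_nonneg fun u _ => le_max_right _ _)
      split
      · exact max_le (hbound s hs t ht ‹_›) hKf
      · exact hKf)
    (fun s hs => max_eq_right (by linarith [ha s hs]))
  intro s hs t ht
  have := key s hs t ht
  have h2 : -(x s t) ≤ max (-(x s t)) 0 := le_max_left _ _
  linarith [h2.trans_eq this]

lemma zero_of_closed_system {ι : Type*} (S : Finset ι) (x d : ι → ℝ → ℝ) (a b K : ℝ)
    (hK : 0 ≤ K)
    (hderiv : ∀ s ∈ S, ∀ t ∈ Set.Icc a b, HasDerivAt (x s) (d s t) t)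
    (hbound : ∀ s ∈ S, ∀ t ∈ Set.Ico a b, |d s t| ≤ K * ∑ u ∈ S, |x u t|)
    (ha : ∀ s ∈ S, x s a = 0) :
    ∀ s ∈ S, ∀ t ∈ Set.Icc a b, x s t = 0 := by
  have key := gronwall_generic S x d a b K (fun y => |y|)
    (fun s t => |d s t|)
    (fun y => abs_nonneg _)
    continuous_abs
    hderiv
    (fun s hs t ht ε hε => dini_abs (hderiv s hs t (Set.Ico_subset_Icc_self ht)) hε le_rfl)
    hbound
    (fun s hs => by rw [ha s hs]; exact abs_zero)
  intro s hs t ht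
  exact abs_eq_zero.mp (key s hs t ht)

end Aux

section CME
open Filter Set

/-- The "unreachable" states `o > n` inside the box. -/
def badSet (N0 C : ℕ) : Finset (ℕ × ℕ) :=
  (Finset.range (N0+1) ×ˢ Finset.range (C+1)).filter (fun p => p.1 < p.2)

lemma mem_badSet {N0 C : ℕ} {p : ℕ × ℕ} :
    p ∈ badSet N0 C ↔ p.1 ≤ N0 ∧ p.2 ≤ C ∧ p.1 < p.2 := by
  simp [badSet, Finset.mem_filter, Finset.mem_product, Nat.lt_succ_iff, and_assoc]

/-- Coefficient bounds for the CME, uniform over the box. -/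
lemma cme_coeff_bounds {N0 C n o : ℕ} (hn : n ≤ N0) (ho : o ≤ C)
    {κd κe kat Ka : ℝ} (hκd : 0 ≤ κd) (hκe : 0 ≤ κe) (hkat : 0 ≤ kat) (hkatle : kat ≤ Ka) :
    |κd * (o:ℝ) + κe * ((n:ℝ) - o) + kat * ((n:ℝ) - o) * ((C:ℝ) - o)|
        ≤ (κd + κe + Ka + 1) * ((N0:ℝ) + C + 2)^2 ∧
    κd * ((o:ℝ) + 1) ≤ (κd + κe + Ka + 1) * ((N0:ℝ) + C + 2)^2 ∧
    |κe * ((n:ℝ) + 1 - o)| ≤ (κd + κe + Ka + 1) * ((N0:ℝ) + C + 2)^2 ∧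
    |kat * ((n:ℝ) - o + 1) * ((C:ℝ) - o + 1)| ≤ (κd + κe + Ka + 1) * ((N0:ℝ) + C + 2)^2 := by
  have hn' : (n:ℝ) ≤ N0 := by exact_mod_cast hn
  have ho' : (o:ℝ) ≤ C := by exact_mod_cast ho
  have hn0 : (0:ℝ) ≤ n := Nat.cast_nonneg n
  have ho0 : (0:ℝ) ≤ o := Nat.cast_nonneg o
  have hN0 : (0:ℝ) ≤ N0 := Nat.cast_nonneg N0
  have hC0 : (0:ℝ) ≤ C := Nat.cast_nonneg C
  have hKa : 0 ≤ Ka := le_trans hkat hkatle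
  set M : ℝ := (N0:ℝ) + C + 2 with hM
  have hM2 : (2:ℝ) ≤ M := by rw [hM]; linarith
  have hM0 : (0:ℝ) ≤ M := by linarith
  have b1 : |(n:ℝ) - o| ≤ M := abs_le.mpr ⟨by linarith, by linarith⟩
  have b2 : |(C:ℝ) - o| ≤ M := abs_le.mpr ⟨by linarith, by linarith⟩
  have b3 : |(n:ℝ) + 1 - o| ≤ M := abs_le.mpr ⟨by linarith, by linarith⟩
  have b4 : |(n:ℝ) - o + 1| ≤ M := abs_le.mpr ⟨by linarith, by linarith⟩
  have b5 : |(C:ℝ) - o + 1| ≤ M := abs_le.mpr ⟨by linarith, by linarith⟩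
  have b6 : (o:ℝ) + 1 ≤ M := by linarith
  have hMM : M ≤ M * M := by nlinarith
  have hsum : κd * M + κe * M + Ka * (M * M) ≤ (κd + κe + Ka + 1) * M^2 := by
    have h1 : κd * M ≤ κd * (M * M) := mul_le_mul_of_nonneg_left hMM hκd
    have h2 : κe * M ≤ κe * (M * M) := mul_le_mul_of_nonneg_left hMM hκe
    nlinarith [sq_nonneg M]
  have hd : 0 ≤ κd * M := by positivity
  have he : 0 ≤ κe * M := by positivity
  have hk : 0 ≤ Ka * (M * M) := by positivity
  refine ⟨?_, ?_, ?_, ?_⟩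
  · calc |κd * (o:ℝ) + κe * ((n:ℝ) - o) + kat * ((n:ℝ) - o) * ((C:ℝ) - o)|
        ≤ |κd * (o:ℝ)| + |κe * ((n:ℝ) - o)| + |kat * ((n:ℝ) - o) * ((C:ℝ) - o)| :=
          (abs_add_le _ _).trans (add_le_add_left (abs_add_le _ _) _)
      _ ≤ κd * M + κe * M + Ka * (M * M) := by
          have e1 : |κd * (o:ℝ)| = κd * o := abs_of_nonneg (by positivity)
          have e2 : |κe * ((n:ℝ) - o)| = κe * |(n:ℝ) - o| := by
            rw [abs_mul, abs_of_nonneg hκe]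
          have e3 : |kat * ((n:ℝ) - o) * ((C:ℝ) - o)|
              = kat * (|(n:ℝ) - o| * |(C:ℝ) - o|) := by
            rw [abs_mul, abs_mul, abs_of_nonneg hkat, mul_assoc]
          rw [e1, e2, e3]
          have : |(n:ℝ) - o| * |(C:ℝ) - o| ≤ M * M :=
            mul_le_mul b1 b2 (abs_nonneg _) hM0
          have hkm : kat * (|(n:ℝ) - o| * |(C:ℝ) - o|) ≤ Ka * (M * M) :=
            mul_le_mul hkatle this (by positivity) hKa
          have h1 := mul_le_mul_of_nonneg_left b1 hκe
          have h2 : κd * (o:ℝ) ≤ κd * M := mul_le_mul_of_nonneg_left (by linarith) hκd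
          linarith
      _ ≤ (κd + κe + Ka + 1) * M^2 := hsum
  · calc κd * ((o:ℝ) + 1) ≤ κd * M := mul_le_mul_of_nonneg_left b6 hκd
      _ ≤ (κd + κe + Ka + 1) * M^2 := by linarith
  · calc |κe * ((n:ℝ) + 1 - o)| = κe * |(n:ℝ) + 1 - o| := by
          rw [abs_mul, abs_of_nonneg hκe]
      _ ≤ κe * M := mul_le_mul_of_nonneg_left b3 hκe
      _ ≤ (κd + κe + Ka + 1) * M^2 := by linarith
  · calc |kat * ((n:ℝ) - o + 1) * ((C:ℝ) - o + 1)|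
        = kat * (|(n:ℝ) - o + 1| * |(C:ℝ) - o + 1|) := by
          rw [abs_mul, abs_mul, abs_of_nonneg hkat, mul_assoc]
      _ ≤ Ka * (M * M) :=
          mul_le_mul hkatle (mul_le_mul b4 b5 (abs_nonneg _) hM0) (by positivity) hKa
      _ ≤ (κd + κe + Ka + 1) * M^2 := by linarith

lemma cme_vanish (N0 C : ℕ) (κd κe : ℝ) (κa : ℝ → ℝ)
    (hκd : 0 ≤ κd) (hκe : 0 ≤ κe) (hκa_cont : Continuous κa) (hκa : ∀ t, 0 ≤ κa t)
    (P : ℕ → ℕ → ℝ → ℝ) (hP : IsCMESolution N0 C κd κe κa P)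
    (hinit0 : ∀ n o : ℕ, ¬(n = N0 ∧ o = 0) → P n o 0 = 0) :
    ∀ n o : ℕ, n ≤ N0 → o ≤ C → n < o → ∀ t : ℝ, 0 ≤ t → P n o t = 0 := by
  intro n o hn ho hno t ht
  obtain ⟨tm, htm, hmax⟩ := isCompact_Icc.exists_isMaxOn (Set.nonempty_Icc.mpr ht)
    hκa_cont.continuousOn
  set Ka := κa tm with hKadef
  have hKa0 : 0 ≤ Ka := hκa tm
  set B : ℝ := (κd + κe + Ka + 1) * ((N0:ℝ) + C + 2)^2 with hBdef
  have hB0 : 0 ≤ B := by positivity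
  refine zero_of_closed_system (badSet N0 C)
    (fun p s => P p.1 p.2 s) (fun p s => cmeRHS N0 C κd κe κa P p.1 p.2 s)
    0 t (4*B) (by linarith) ?_ ?_ ?_ (n, o) (mem_badSet.mpr ⟨hn, ho, hno⟩)
    t ⟨ht, le_refl t⟩
  · intro p hp s hs
    obtain ⟨h1, h2, _⟩ := mem_badSet.mp hp
    exact hP p.1 h1 p.2 h2 s hs.1
  · rintro ⟨m, k⟩ hp s hs
    obtain ⟨h1, h2, h3⟩ := mem_badSet.mp hp
    simp only at h1 h2 h3
    set F := ∑ u ∈ badSet N0 C, |P u.1 u.2 s| with hF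
    have hF0 : 0 ≤ F := Finset.sum_nonneg fun u _ => abs_nonneg _
    have hmem : ∀ a b : ℕ, a ≤ N0 → b ≤ C → a < b → |P a b s| ≤ F := fun a b ha hb hab =>
      Finset.single_le_sum (f := fun u : ℕ × ℕ => |P u.1 u.2 s|) (fun u _ => abs_nonneg _)
        (a := (a, b)) (mem_badSet.mpr ⟨ha, hb, hab⟩)
    obtain ⟨c0, c1, c2, c3⟩ := cme_coeff_bounds h1 h2 hκd hκe (hκa s)
      (hmax ⟨hs.1, le_of_lt hs.2⟩)
    have hBF : 0 ≤ B * F := mul_nonneg hB0 hF0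
    have e0 : |(-(κd * (k:ℝ) + κe * ((m:ℝ) - k) + κa s * ((m:ℝ) - k) * ((C:ℝ) - k)))
        * P m k s| ≤ B * F := by
      rw [abs_mul, abs_neg]
      exact mul_le_mul c0 (hmem m k h1 h2 h3) (abs_nonneg _) hB0
    have e1 : |(if k + 1 ≤ C then κd * ((k:ℝ) + 1) * P m (k + 1) s else 0)| ≤ B * F := by
      split_ifs with h
      · rw [abs_mul]
        have hco : |κd * ((k:ℝ) + 1)| = κd * ((k:ℝ) + 1) := abs_of_nonneg (by positivity)
        rw [hco]
        exact mul_le_mul c1 (hmem m (k+1) h1 h (by omega)) (abs_nonneg _) hB0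
      · simpa using hBF
    have e2 : |(if m + 1 ≤ N0 then κe * ((m:ℝ) + 1 - k) * P (m + 1) k s else 0)| ≤ B * F := by
      split_ifs with h
      · by_cases heq : k = m + 1
        · have hz : (m:ℝ) + 1 - k = 0 := by rw [heq]; push_cast; ring
          rw [hz]
          simpa using hBF
        · rw [abs_mul]
          exact mul_le_mul c2 (hmem (m+1) k h h2 (by omega)) (abs_nonneg _) hB0
      · simpa using hBF
    have e3 : |(if 1 ≤ k then
        κa s * ((m:ℝ) - k + 1) * ((C:ℝ) - k + 1) * P m (k - 1) s else 0)| ≤ B * F := by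
      split_ifs with h
      · by_cases heq : k = m + 1
        · have hz : (m:ℝ) - k + 1 = 0 := by rw [heq]; push_cast; ring
          rw [hz]
          simpa using hBF
        · rw [abs_mul]
          exact mul_le_mul c3 (hmem m (k-1) h1 (by omega) (by omega)) (abs_nonneg _) hB0
      · simpa using hBF
    show |cmeRHS N0 C κd κe κa P m k s| ≤ 4 * B * F
    rw [cmeRHS]
    refine le_trans ((abs_add_le _ _).trans (add_le_add_left (abs_add_three _ _ _) _)) ?_
    linarith
  · intro p hp
    obtain ⟨_, _, h3⟩ := mem_badSet.mp hp
    exact hinit0 p.1 p.2 (by omega)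

/-- The reachable states `o ≤ n` inside the box. -/
def goodSet (N0 C : ℕ) : Finset (ℕ × ℕ) :=
  (Finset.range (N0+1) ×ˢ Finset.range (C+1)).filter (fun p => p.2 ≤ p.1)

lemma mem_goodSet {N0 C : ℕ} {p : ℕ × ℕ} :
    p ∈ goodSet N0 C ↔ p.1 ≤ N0 ∧ p.2 ≤ C ∧ p.2 ≤ p.1 := by
  simp [goodSet, Finset.mem_filter, Finset.mem_product, Nat.lt_succ_iff, and_assoc]

lemma cme_nonneg (N0 C : ℕ) (κd κe : ℝ) (κa : ℝ → ℝ)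
    (hκd : 0 ≤ κd) (hκe : 0 ≤ κe) (hκa_cont : Continuous κa) (hκa : ∀ t, 0 ≤ κa t)
    (P : ℕ → ℕ → ℝ → ℝ) (hP : IsCMESolution N0 C κd κe κa P)
    (hinit1 : P N0 0 0 = 1)
    (hinit0 : ∀ n o : ℕ, ¬(n = N0 ∧ o = 0) → P n o 0 = 0) :
    ∀ n o : ℕ, n ≤ N0 → o ≤ C → ∀ t : ℝ, 0 ≤ t → 0 ≤ P n o t := by
  have hvan := cme_vanish N0 C κd κe κa hκd hκe hκa_cont hκa P hP hinit0
  intro n o hn ho t ht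
  by_cases hgood : o ≤ n
  swap
  · rw [hvan n o hn ho (by omega) t ht]
  obtain ⟨tm, htm, hmax⟩ := isCompact_Icc.exists_isMaxOn (Set.nonempty_Icc.mpr ht)
    hκa_cont.continuousOn
  set Ka := κa tm with hKadef
  have hKa0 : 0 ≤ Ka := hκa tm
  set B : ℝ := (κd + κe + Ka + 1) * ((N0:ℝ) + C + 2)^2 with hBdef
  have hB0 : 0 ≤ B := by positivity
  refine nonneg_of_metzler (goodSet N0 C)
    (fun p s => P p.1 p.2 s) (fun p s => cmeRHS N0 C κd κe κa P p.1 p.2 s)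
    0 t (4*B) (by linarith) ?_ ?_ ?_ (n, o) (mem_goodSet.mpr ⟨hn, ho, hgood⟩)
    t ⟨ht, le_refl t⟩
  · intro p hp s hs
    obtain ⟨h1, h2, _⟩ := mem_goodSet.mp hp
    exact hP p.1 h1 p.2 h2 s hs.1
  · rintro ⟨m, k⟩ hp s hs hneg
    obtain ⟨h1, h2, h3⟩ := mem_goodSet.mp hp
    simp only at h1 h2 h3 hneg
    set F := ∑ u ∈ goodSet N0 C, max (-(P u.1 u.2 s)) 0 with hF
    have hF0 : 0 ≤ F := Finset.sum_nonneg fun u _ => le_max_right _ _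
    have hmemN : ∀ a b : ℕ, a ≤ N0 → b ≤ C → b ≤ a → max (-(P a b s)) 0 ≤ F :=
      fun a b ha hb hab =>
      Finset.single_le_sum (f := fun u : ℕ × ℕ => max (-(P u.1 u.2 s)) 0)
        (fun u _ => le_max_right _ _) (a := (a, b)) (mem_goodSet.mpr ⟨ha, hb, hab⟩)
    obtain ⟨c0, c1, c2, c3⟩ := cme_coeff_bounds h1 h2 hκd hκe (hκa s)
      (hmax ⟨hs.1, le_of_lt hs.2⟩)
    have hBF : 0 ≤ B * F := mul_nonneg hB0 hF0
    have hk' : (k:ℝ) ≤ m := by exact_mod_cast h3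
    have hkC : (k:ℝ) ≤ C := by exact_mod_cast h2
    have e0 : -((-(κd * (k:ℝ) + κe * ((m:ℝ) - k) + κa s * ((m:ℝ) - k) * ((C:ℝ) - k)))
        * P m k s) ≤ B * F := by
      have hring : -((-(κd * (k:ℝ) + κe * ((m:ℝ) - k) + κa s * ((m:ℝ) - k) * ((C:ℝ) - k)))
          * P m k s) = (κd * (k:ℝ) + κe * ((m:ℝ) - k) + κa s * ((m:ℝ) - k) * ((C:ℝ) - k))
          * P m k s := by ring
      rw [hring]
      calc (κd * (k:ℝ) + κe * ((m:ℝ) - k) + κa s * ((m:ℝ) - k) * ((C:ℝ) - k)) * P m k s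
          ≤ |(κd * (k:ℝ) + κe * ((m:ℝ) - k) + κa s * ((m:ℝ) - k) * ((C:ℝ) - k)) * P m k s| :=
            le_abs_self _
        _ = |κd * (k:ℝ) + κe * ((m:ℝ) - k) + κa s * ((m:ℝ) - k) * ((C:ℝ) - k)| * (-(P m k s)) := by
            rw [abs_mul, abs_of_nonpos hneg]
        _ ≤ |κd * (k:ℝ) + κe * ((m:ℝ) - k) + κa s * ((m:ℝ) - k) * ((C:ℝ) - k)|
              * max (-(P m k s)) 0 :=
            mul_le_mul_of_nonneg_left (le_max_left _ _) (abs_nonneg _)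
        _ ≤ B * F := mul_le_mul c0 (hmemN m k h1 h2 h3) (le_max_right _ _) hB0
    have e1 : -(if k + 1 ≤ C then κd * ((k:ℝ) + 1) * P m (k + 1) s else 0) ≤ B * F := by
      split_ifs with h
      · by_cases hk : k = m
        · rw [hvan m (k+1) h1 h (by omega) s hs.1]
          simpa using hBF
        · calc -(κd * ((k:ℝ) + 1) * P m (k + 1) s)
              = κd * ((k:ℝ) + 1) * (-(P m (k + 1) s)) := by ring
            _ ≤ κd * ((k:ℝ) + 1) * max (-(P m (k + 1) s)) 0 :=
                mul_le_mul_of_nonneg_left (le_max_left _ _) (by positivity)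
            _ ≤ B * F := mul_le_mul c1 (hmemN m (k+1) h1 h (by omega)) (le_max_right _ _) hB0
      · simpa using hBF
    have e2 : -(if m + 1 ≤ N0 then κe * ((m:ℝ) + 1 - k) * P (m + 1) k s else 0) ≤ B * F := by
      split_ifs with h
      · calc -(κe * ((m:ℝ) + 1 - k) * P (m + 1) k s)
            = κe * ((m:ℝ) + 1 - k) * (-(P (m + 1) k s)) := by ring
          _ ≤ κe * ((m:ℝ) + 1 - k) * max (-(P (m + 1) k s)) 0 :=
              mul_le_mul_of_nonneg_left (le_max_left _ _)
                (mul_nonneg hκe (by linarith))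
          _ ≤ B * F := mul_le_mul (le_trans (le_abs_self _) c2)
              (hmemN (m+1) k h h2 (by omega)) (le_max_right _ _) hB0
      · simpa using hBF
    have e3 : -(if 1 ≤ k then
        κa s * ((m:ℝ) - k + 1) * ((C:ℝ) - k + 1) * P m (k - 1) s else 0) ≤ B * F := by
      split_ifs with h
      · calc -(κa s * ((m:ℝ) - k + 1) * ((C:ℝ) - k + 1) * P m (k - 1) s)
            = κa s * ((m:ℝ) - k + 1) * ((C:ℝ) - k + 1) * (-(P m (k - 1) s)) := by ring
          _ ≤ κa s * ((m:ℝ) - k + 1) * ((C:ℝ) - k + 1) * max (-(P m (k - 1) s)) 0 :=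
              mul_le_mul_of_nonneg_left (le_max_left _ _)
                (mul_nonneg (mul_nonneg (hκa s) (by linarith)) (by linarith))
          _ ≤ B * F := mul_le_mul (le_trans (le_abs_self _) c3)
              (hmemN m (k-1) h1 (by omega) (by omega)) (le_max_right _ _) hB0
      · simpa using hBF
    show -(cmeRHS N0 C κd κe κa P m k s) ≤ 4 * B * F
    rw [cmeRHS]
    linarith
  · intro p hp
    show 0 ≤ P p.1 p.2 0
    by_cases h : p.1 = N0 ∧ p.2 = 0
    · rw [h.1, h.2, hinit1]; norm_num
    · rw [hinit0 p.1 p.2 h]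


lemma tel2 (u : ℕ → ℝ) :
    ∀ b a : ℕ, a ≤ b → ∑ n ∈ Finset.Icc a b, (u (n+1) - u n) = u (b+1) - u a := by
  intro b
  induction b with
  | zero => intro a ha; interval_cases a; simp
  | succ b ih =>
    intro a ha
    by_cases hab : a = b + 1
    · subst hab; rw [Finset.Icc_self, Finset.sum_singleton]
    · rw [Finset.sum_Icc_succ_top (by omega), ih a (by omega)]
      ring

lemma telescope_Icc (u : ℕ → ℝ) {a b : ℕ} (hab : a ≤ b) :
    ∑ n ∈ Finset.Icc a b, ((if n + 1 ≤ b then u (n+1) else 0) - u n) = -u a := by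
  rcases Nat.eq_zero_or_pos b with hb | hb
  · subst hb; interval_cases a; simp
  · obtain ⟨c, rfl⟩ := Nat.exists_eq_add_of_le hb
    by_cases hac : a = 1 + c
    · subst hac; rw [Finset.Icc_self, Finset.sum_singleton, if_neg (by omega)]; ring
    · have ha' : a ≤ c := by omega
      have h1c : 1 + c = c + 1 := by omega
      rw [h1c, Finset.sum_Icc_succ_top (by omega)]
      have hcong : ∀ n ∈ Finset.Icc a c,
          ((if n + 1 ≤ c + 1 then u (n+1) else 0) - u n) = u (n+1) - u n := by
        intro n hn
        have := Finset.mem_Icc.mp hn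
        rw [if_pos (by omega)]
      rw [Finset.sum_congr rfl hcong, tel2 u c a ha', if_neg (by omega)]
      ring

lemma cme_sum_rhs (N0 C : ℕ) (κd κe : ℝ) (κa : ℝ → ℝ) (P : ℕ → ℕ → ℝ → ℝ)
    (n0 : ℕ) (hn0 : n0 ≤ N0) (t : ℝ) :
    ∑ n ∈ Finset.Icc n0 N0, ∑ o ∈ Finset.range (C+1), cmeRHS N0 C κd κe κa P n o t
      = -∑ o ∈ Finset.range (C+1), κe * ((n0:ℝ) - o) * P n0 o t := by
  have hsplit : ∀ n : ℕ, ∑ o ∈ Finset.range (C+1), cmeRHS N0 C κd κe κa P n o t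
      = (∑ o ∈ Finset.range (C+1),
          ((if o + 1 ≤ C then κd * ((o:ℝ)+1) * P n (o+1) t else 0) - κd * (o:ℝ) * P n o t))
      + (∑ o ∈ Finset.range (C+1),
          ((if 1 ≤ o then κa t * ((n:ℝ) - o + 1) * ((C:ℝ) - o + 1) * P n (o-1) t else 0)
            - κa t * ((n:ℝ) - o) * ((C:ℝ) - o) * P n o t))
      + (∑ o ∈ Finset.range (C+1),
          ((if n + 1 ≤ N0 then κe * ((n:ℝ) + 1 - o) * P (n+1) o t else 0)
            - κe * ((n:ℝ) - o) * P n o t)) := by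
    intro n
    rw [← Finset.sum_add_distrib, ← Finset.sum_add_distrib]
    refine Finset.sum_congr rfl fun o _ => ?_
    rw [cmeRHS]; ring
  have hd : ∀ n : ℕ, ∑ o ∈ Finset.range (C+1),
      ((if o + 1 ≤ C then κd * ((o:ℝ)+1) * P n (o+1) t else 0) - κd * (o:ℝ) * P n o t) = 0 := by
    intro n
    set v : ℕ → ℝ := fun o => κd * (o:ℝ) * P n o t with hv
    rw [Finset.sum_sub_distrib]
    have h1 : ∑ o ∈ Finset.range (C+1), (if o + 1 ≤ C then κd * ((o:ℝ)+1) * P n (o+1) t else 0)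
        = ∑ o ∈ Finset.range C, v (o+1) := by
      rw [Finset.sum_range_succ, if_neg (by omega), add_zero]
      refine Finset.sum_congr rfl fun o ho => ?_
      have := Finset.mem_range.mp ho
      rw [if_pos (by omega), hv]
      push_cast; ring
    have h2 : ∑ o ∈ Finset.range (C+1), v o = ∑ o ∈ Finset.range C, v (o+1) + v 0 :=
      Finset.sum_range_succ' v C
    have h3 : v 0 = 0 := by rw [hv]; push_cast; ring
    have h4 : ∑ o ∈ Finset.range (C+1), κd * (o:ℝ) * P n o t = ∑ o ∈ Finset.range (C+1), v o :=
      rfl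
    rw [h1, h4, h2, h3]
    ring
  have ha : ∀ n : ℕ, ∑ o ∈ Finset.range (C+1),
      ((if 1 ≤ o then κa t * ((n:ℝ) - o + 1) * ((C:ℝ) - o + 1) * P n (o-1) t else 0)
        - κa t * ((n:ℝ) - o) * ((C:ℝ) - o) * P n o t) = 0 := by
    intro n
    set w : ℕ → ℝ := fun o => κa t * ((n:ℝ) - o) * ((C:ℝ) - o) * P n o t with hw
    rw [Finset.sum_sub_distrib]
    have h1 : ∑ o ∈ Finset.range (C+1),
        (if 1 ≤ o then κa t * ((n:ℝ) - o + 1) * ((C:ℝ) - o + 1) * P n (o-1) t else 0)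
        = ∑ o ∈ Finset.range C, w o := by
      rw [Finset.sum_range_succ'
        (fun o => if 1 ≤ o then κa t * ((n:ℝ) - o + 1) * ((C:ℝ) - o + 1) * P n (o-1) t else 0) C]
      rw [if_neg (by omega), add_zero]
      refine Finset.sum_congr rfl fun o _ => ?_
      rw [if_pos (by omega), hw]
      simp only [Nat.add_sub_cancel]
      push_cast; ring
    have h2 : ∑ o ∈ Finset.range (C+1), κa t * ((n:ℝ) - o) * ((C:ℝ) - o) * P n o t
        = ∑ o ∈ Finset.range C, w o + w C := Finset.sum_range_succ w C
    have h3 : w C = 0 := by rw [hw]; simp only [sub_self]; ring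
    rw [h1, h2, h3]
    ring
  have he : ∑ n ∈ Finset.Icc n0 N0, ∑ o ∈ Finset.range (C+1),
      ((if n + 1 ≤ N0 then κe * ((n:ℝ) + 1 - o) * P (n+1) o t else 0)
        - κe * ((n:ℝ) - o) * P n o t)
      = -∑ o ∈ Finset.range (C+1), κe * ((n0:ℝ) - o) * P n0 o t := by
    rw [Finset.sum_comm, ← Finset.sum_neg_distrib]
    refine Finset.sum_congr rfl fun o _ => ?_
    have := telescope_Icc (fun n => κe * ((n:ℝ) - o) * P n o t) hn0
    rw [← this]
    refine Finset.sum_congr rfl fun n _ => ?_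
    congr 1
    split_ifs with h
    · push_cast; ring
    · rfl
  calc ∑ n ∈ Finset.Icc n0 N0, ∑ o ∈ Finset.range (C+1), cmeRHS N0 C κd κe κa P n o t
      = ∑ n ∈ Finset.Icc n0 N0, ((∑ o ∈ Finset.range (C+1),
          ((if o + 1 ≤ C then κd * ((o:ℝ)+1) * P n (o+1) t else 0) - κd * (o:ℝ) * P n o t))
        + (∑ o ∈ Finset.range (C+1),
          ((if 1 ≤ o then κa t * ((n:ℝ) - o + 1) * ((C:ℝ) - o + 1) * P n (o-1) t else 0)
            - κa t * ((n:ℝ) - o) * ((C:ℝ) - o) * P n o t))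
        + (∑ o ∈ Finset.range (C+1),
          ((if n + 1 ≤ N0 then κe * ((n:ℝ) + 1 - o) * P (n+1) o t else 0)
            - κe * ((n:ℝ) - o) * P n o t))) := Finset.sum_congr rfl fun n _ => hsplit n
    _ = ∑ n ∈ Finset.Icc n0 N0, ∑ o ∈ Finset.range (C+1),
          ((if n + 1 ≤ N0 then κe * ((n:ℝ) + 1 - o) * P (n+1) o t else 0)
            - κe * ((n:ℝ) - o) * P n o t) := by
        refine Finset.sum_congr rfl fun n _ => ?_
        rw [hd n, ha n]
        ring
    _ = -∑ o ∈ Finset.range (C+1), κe * ((n0:ℝ) - o) * P n0 o t := he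

end CME

/-- For the solution of the synaptic CME started from `(N0, 0)`, the
upper tail of the marginal `P_N` is nonincreasing in time. -/
theorem cme_margN_upper_tail_antitone
    (N0 C : ℕ) (κd κe : ℝ) (κa : ℝ → ℝ)
    (hN0 : 1 ≤ N0) (hC : 1 ≤ C) (hκd : 0 ≤ κd) (hκe : 0 ≤ κe)
    (hκa_cont : Continuous κa) (hκa : ∀ t : ℝ, 0 ≤ κa t)
    (P : ℕ → ℕ → ℝ → ℝ) (hP : IsCMESolution N0 C κd κe κa P)
    (hinit1 : P N0 0 0 = 1)
    (hinit0 : ∀ n o : ℕ, ¬(n = N0 ∧ o = 0) → P n o 0 = 0) :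
    ∀ n0 : ℕ, n0 ≤ N0 → ∀ t t' : ℝ, 0 ≤ t → t ≤ t' →
      ∑ n ∈ Finset.Icc n0 N0, margN C P n t' ≤ ∑ n ∈ Finset.Icc n0 N0, margN C P n t := by
  intro n0 hn0 t t' ht htt'
  have hnn := cme_nonneg N0 C κd κe κa hκd hκe hκa_cont hκa P hP hinit1 hinit0
  have hvan := cme_vanish N0 C κd κe κa hκd hκe hκa_cont hκa P hP hinit0
  set T : ℝ → ℝ := fun s => ∑ n ∈ Finset.Icc n0 N0, margN C P n s with hTdef
  have hderiv : ∀ s : ℝ, 0 ≤ s → HasDerivAt T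
      (-∑ o ∈ Finset.range (C+1), κe * ((n0:ℝ) - o) * P n0 o s) s := by
    intro s hs
    have h1 : HasDerivAt T (∑ n ∈ Finset.Icc n0 N0, ∑ o ∈ Finset.range (C+1),
        cmeRHS N0 C κd κe κa P n o s) s := by
      apply HasDerivAt.fun_sum
      intro n hn
      have hn' := Finset.mem_Icc.mp hn
      exact HasDerivAt.fun_sum (fun o ho => hP n hn'.2 o
        (by have := Finset.mem_range.mp ho; omega) s hs)
    rwa [cme_sum_rhs N0 C κd κe κa P n0 hn0 s] at h1
  have hcont : ContinuousOn T (Set.Ici 0) :=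
    fun s hs => ((hderiv s hs).continuousAt).continuousWithinAt
  have hdiff : DifferentiableOn ℝ T (interior (Set.Ici 0)) := by
    rw [interior_Ici]
    exact fun s hs => ((hderiv s (le_of_lt hs)).differentiableAt).differentiableWithinAt
  have hdnp : ∀ s ∈ interior (Set.Ici (0:ℝ)), deriv T s ≤ 0 := by
    rw [interior_Ici]
    intro s hs
    rw [(hderiv s (le_of_lt hs)).deriv]
    have hsum : 0 ≤ ∑ o ∈ Finset.range (C+1), κe * ((n0:ℝ) - o) * P n0 o s := by
      apply Finset.sum_nonneg
      intro o ho
      have hoC : o ≤ C := by have := Finset.mem_range.mp ho; omega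
      by_cases hcase : o ≤ n0
      · have h1 : (0:ℝ) ≤ (n0:ℝ) - o := by
          have : (o:ℝ) ≤ n0 := by exact_mod_cast hcase
          linarith
        exact mul_nonneg (mul_nonneg hκe h1) (hnn n0 o hn0 hoC s (le_of_lt hs))
      · rw [hvan n0 o hn0 hoC (by omega) s (le_of_lt hs), mul_zero]
    linarith
  exact antitoneOn_of_deriv_nonpos (convex_Ici 0) hcont hdiff hdnp
    (Set.mem_Ici.mpr ht) (Set.mem_Ici.mpr (le_trans ht htt')) htt'
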